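/- Define y₂ := x_{2,1} and, for each n ≥ 2, y_{n+1} := x_{2,0}·x_{n+1,1} − x_{n+1,0}·x_{2,1} in R_∞. Then D_∞(y_{n+1}) = 0 for every n ≥ 2, and the family consisting of all variables x_{n,0} (n ≥ 2), all elements y_n (n ≥ 2), and all elements x̄_{n,k} (n ≥ 2, 2 ≤ k ≤ n) is algebraically independent over ℚ. -/

import Mathlib

open MvPolynomial

noncomputable section

/-- The index set `{(n,k) : 2 ≤ n, 0 ≤ k ≤ n}` of the variables `x_{n,k}` of `R_∞`. -/
abbrev Idx : Type := {p : ℕ × ℕ // 2 ≤ p.1 ∧ p.2 ≤ p.1}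

/-- The polynomial ring `R_∞ = ℚ[x_{n,k} : n ≥ 2, 0 ≤ k ≤ n]`. -/
abbrev Rinf : Type := MvPolynomial Idx ℚ

/-- The variable `x_{n,k}` (and `0` for out-of-range indices, which never occur below). -/
def xv (n k : ℕ) : Rinf := if h : 2 ≤ n ∧ k ≤ n then X ⟨(n, k), h⟩ else 0

/-- The derivation `D_∞` with `D_∞(x_{n,k}) = x_{n,k−1}` for `1 ≤ k ≤ n` and
`D_∞(x_{n,0}) = 0`. -/
def Dinf : Derivation ℚ Rinf Rinf :=
  MvPolynomial.mkDerivation ℚ fun s : Idx =>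
    if s.1.2 = 0 then 0 else xv s.1.1 (s.1.2 - 1)

/-- The weight `wt(x_{n,k}) = k`. -/
def wt : Idx → ℕ := fun s => s.1.2

/-- `R_∞^{(d)}`: the `ℚ`-span of the monomials of weight `d`. -/
def W (d : ℕ) : Submodule ℚ Rinf := weightedHomogeneousSubmodule ℚ wt d

/-- `x̄_{n,2ℓ} := x_{n,ℓ}² + 2 Σ_{i=0}^{ℓ−1} (−1)^{ℓ+i} x_{n,i} x_{n,2ℓ−i}`. -/
def xbarE (n l : ℕ) : Rinf :=
  xv n l ^ 2 + 2 * ∑ i ∈ Finset.range l, (-1 : Rinf) ^ (l + i) * xv n i * xv n (2 * l - i)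

/-- `x̂_{n,2ℓ+1} := x_{n,ℓ}x_{n,ℓ+1} + Σ_{i=0}^{ℓ−1} (−1)^{ℓ+i}(2ℓ−2i+1) x_{n,i} x_{n,2ℓ+1−i}`. -/
def xhatO (n l : ℕ) : Rinf :=
  xv n l * xv n (l + 1) +
    ∑ i ∈ Finset.range l,
      (-1 : Rinf) ^ (l + i) * ((2 * l - 2 * i + 1 : ℕ) : Rinf) * xv n i * xv n (2 * l + 1 - i)

/-- `x̄_{n,2ℓ+1} := x_{n,1}·x̄_{n,2ℓ} − x_{n,0}·x̂_{n,2ℓ+1}`. -/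
def xbarO (n l : ℕ) : Rinf := xv n 1 * xbarE n l - xv n 0 * xhatO n l

/-- `x̄_{n,k}` for `k ≥ 2` (even or odd case). -/
def xbar (n k : ℕ) : Rinf := if k % 2 = 0 then xbarE n (k / 2) else xbarO n (k / 2)

/-- `y₂ := x_{2,1}` and `y_{n+1} := x_{2,0}·x_{n+1,1} − x_{n+1,0}·x_{2,1}` for `n ≥ 2`. -/
def yv (n : ℕ) : Rinf :=
  if n = 2 then xv 2 1 else xv 2 0 * xv n 1 - xv n 0 * xv 2 1

/-- The family consisting of all `x_{n,0}` (`n ≥ 2`), all `y_n` (`n ≥ 2`) and all `x̄_{n,k}`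
(`n ≥ 2`, `2 ≤ k ≤ n`). -/
def fam :
    ({n : ℕ // 2 ≤ n} ⊕ {n : ℕ // 2 ≤ n} ⊕ {p : ℕ × ℕ // 2 ≤ p.1 ∧ 2 ≤ p.2 ∧ p.2 ≤ p.1}) →
      Rinf :=
  Sum.elim (fun n => xv n.1 0) (Sum.elim (fun n => yv n.1) (fun p => xbar p.1.1 p.1.2))


abbrev K : Type := FractionRing Rinf
def emb : Rinf →ₐ[ℚ] K := IsScalarTower.toAlgHom ℚ Rinf K
lemma em_inj : Function.Injective emb := IsFractionRing.injective Rinf K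
instance : CharZero K := charZero_of_injective_algebraMap (IsFractionRing.injective Rinf K)
def Xk (n k : ℕ) : K := emb (xv n k)
lemma Xk_ne (n k : ℕ) (hn : 2 ≤ n) (hk : k ≤ n) : Xk n k ≠ 0 := by
  have h1 : xv n k ≠ 0 := by rw [xv, dif_pos ⟨hn, hk⟩]; exact X_ne_zero _
  exact (map_ne_zero_iff emb em_inj).2 h1

def vf (n : ℕ) : ℕ → K
  | 0 => Xk n 0
  | 1 => if n = 2 then Xk 2 1 else (Xk n 1 + Xk n 0 * Xk 2 1) / Xk 2 0
  | (k+2) =>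
    if h : k % 2 = 0 then
      (Xk n (2*((k+2)/2)) - vf n ((k+2)/2) ^ 2
        - 2 * ∑ i ∈ (Finset.Ico 1 ((k+2)/2)).attach,
            (-1:K) ^ ((k+2)/2 + i.1) * vf n i.1 * vf n (2*((k+2)/2) - i.1))
        / (2 * (-1:K) ^ ((k+2)/2) * Xk n 0)
    else
      (vf n 1 * Xk n (2*((k+2)/2))
        - Xk n 0 * (vf n ((k+2)/2) * vf n ((k+2)/2 + 1)
          + ∑ i ∈ (Finset.Ico 1 ((k+2)/2)).attach,
              (-1:K) ^ ((k+2)/2 + i.1) * ((2*((k+2)/2) - 2 * i.1 + 1 : ℕ) : K)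
                * vf n i.1 * vf n (2*((k+2)/2) + 1 - i.1))
        - Xk n (2*((k+2)/2) + 1))
        / ((-1:K) ^ ((k+2)/2) * ((2*((k+2)/2) + 1 : ℕ) : K) * Xk n 0 ^ 2)
  termination_by k => k
  decreasing_by
  all_goals first
    | omega
    | (have h2 := i.2; simp only [Finset.mem_Ico] at h2; omega)

lemma vf_zero (n : ℕ) : vf n 0 = Xk n 0 := by rw [vf]
lemma vf_one (n : ℕ) (hn : n ≠ 2) : vf n 1 = (Xk n 1 + Xk n 0 * Xk 2 1) / Xk 2 0 := by
  rw [vf, if_neg hn]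
lemma vf_one2 : vf 2 1 = Xk 2 1 := by rw [vf, if_pos rfl]

lemma vf_even (n l : ℕ) (hl : 1 ≤ l) :
    vf n (2*l) = (Xk n (2*l) - vf n l ^ 2
      - 2 * ∑ i ∈ Finset.Ico 1 l, (-1:K)^(l+i) * vf n i * vf n (2*l - i))
      / (2 * (-1:K)^l * Xk n 0) := by
  obtain ⟨m, rfl⟩ : ∃ m, l = m + 1 := ⟨l - 1, by omega⟩
  conv_lhs => rw [show 2*(m+1) = (2*m)+2 by ring]
  rw [vf, dif_pos (by omega : (2*m) % 2 = 0),
    show ((2*m)+2)/2 = m+1 by omega,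
    Finset.sum_attach (Finset.Ico 1 (m+1))
      (fun i => (-1:K)^(m+1+i) * vf n i * vf n (2*(m+1) - i))]

lemma vf_odd (n l : ℕ) (hl : 1 ≤ l) :
    vf n (2*l+1) = (vf n 1 * Xk n (2*l)
      - Xk n 0 * (vf n l * vf n (l+1)
        + ∑ i ∈ Finset.Ico 1 l,
            (-1:K)^(l+i) * ((2*l - 2*i + 1 : ℕ) : K) * vf n i * vf n (2*l+1-i))
      - Xk n (2*l+1))
      / ((-1:K)^l * ((2*l+1 : ℕ) : K) * Xk n 0 ^ 2) := by
  obtain ⟨m, rfl⟩ : ∃ m, l = m + 1 := ⟨l - 1, by omega⟩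
  conv_lhs => rw [show 2*(m+1)+1 = (2*m+1)+2 by ring, vf]
  rw [dif_neg (by omega : ¬ (2*m+1) % 2 = 0),
    show ((2*m+1)+2)/2 = m+1 by omega,
    Finset.sum_attach (Finset.Ico 1 (m+1))
      (fun i => (-1:K)^(m+1+i) * ((2*(m+1) - 2*i + 1 : ℕ) : K) * vf n i * vf n (2*(m+1)+1 - i))]

def vfI : Idx → K := fun s => vf s.1.1 s.1.2

lemma aeval_xv (n k : ℕ) (hn : 2 ≤ n) (hk : k ≤ n) : aeval vfI (xv n k) = vf n k := by
  rw [xv, dif_pos ⟨hn, hk⟩, aeval_X]; rfl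

lemma aeval_xbarE (n l : ℕ) (hn : 2 ≤ n) (hl : 1 ≤ l) (hln : 2*l ≤ n) :
    aeval vfI (xbarE n l) = Xk n (2*l) := by
  have expand : (aeval vfI) (xbarE n l)
      = vf n l ^ 2 + 2 * ∑ i ∈ Finset.range l, (-1:K)^(l+i) * vf n i * vf n (2*l - i) := by
    rw [xbarE, map_add, map_mul, map_pow, aeval_xv n l hn (by omega), map_sum, map_ofNat]
    congr 1
    refine congrArg _ (Finset.sum_congr rfl fun i hi => ?_)
    rw [Finset.mem_range] at hi
    rw [map_mul, map_mul, map_pow, aeval_xv n i hn (by omega),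
      aeval_xv n (2*l-i) hn (by omega), map_neg, map_one]
  rw [expand, Finset.range_eq_Ico, Finset.sum_eq_sum_Ico_succ_bot hl]
  simp only [Nat.sub_zero, Nat.add_zero, vf_zero]
  rw [vf_even n l hl]
  have hX : Xk n 0 ≠ 0 := Xk_ne n 0 hn (by omega)
  have h1 : ((-1:K)^l) ≠ 0 := pow_ne_zero _ (by norm_num)
  field_simp
  ring

set_option maxHeartbeats 2000000 in
lemma aeval_xbarO (n l : ℕ) (hn : 2 ≤ n) (hl : 1 ≤ l) (hln : 2*l+1 ≤ n) :
    aeval vfI (xbarO n l) = Xk n (2*l+1) := by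
  have expand : (aeval vfI) (xhatO n l)
      = vf n l * vf n (l+1)
        + ∑ i ∈ Finset.range l,
            (-1:K)^(l+i) * ((2*l - 2*i + 1 : ℕ) : K) * vf n i * vf n (2*l+1 - i) := by
    rw [xhatO, map_add, map_mul, aeval_xv n l hn (by omega), aeval_xv n (l+1) hn (by omega),
      map_sum]
    refine congrArg _ (Finset.sum_congr rfl fun i hi => ?_)
    rw [Finset.mem_range] at hi
    rw [map_mul, map_mul, map_mul, aeval_xv n i hn (by omega),
      aeval_xv n (2*l+1-i) hn (by omega), map_pow, map_neg, map_one, map_natCast]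
  rw [xbarO, map_sub, map_mul, map_mul, aeval_xv n 1 hn (by omega),
    aeval_xv n 0 hn (by omega), aeval_xbarE n l hn hl (by omega), expand, vf_zero,
    Finset.range_eq_Ico, Finset.sum_eq_sum_Ico_succ_bot hl]
  simp only [Nat.sub_zero, Nat.add_zero, Nat.mul_zero, vf_zero]
  have hX : Xk n 0 ≠ 0 := Xk_ne n 0 hn (by omega)
  have h1 : ((-1:K)^l) ≠ 0 := pow_ne_zero _ (by norm_num)
  have h2 : ((2*l+1 : ℕ) : K) ≠ 0 := Nat.cast_ne_zero.2 (by omega)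
  have hc : ((-1:K)^l * ((2*l+1:ℕ):K) * Xk n 0 ^ 2) ≠ 0 :=
    mul_ne_zero (mul_ne_zero h1 h2) (pow_ne_zero _ hX)
  have hv : vf n (2*l+1) * ((-1:K)^l * ((2*l+1:ℕ):K) * Xk n 0 ^ 2)
      = vf n 1 * Xk n (2*l)
        - Xk n 0 * (vf n l * vf n (l+1)
          + ∑ i ∈ Finset.Ico 1 l,
              (-1:K)^(l+i) * ((2*l - 2*i + 1 : ℕ) : K) * vf n i * vf n (2*l+1-i))
        - Xk n (2*l+1) := by
    rw [vf_odd n l hl, div_mul_cancel₀ _ hc]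
  linear_combination -hv

lemma aeval_y (n : ℕ) (hn : 2 ≤ n) : aeval vfI (yv n) = Xk n 1 := by
  rcases eq_or_ne n 2 with rfl | h
  · rw [yv, if_pos rfl, aeval_xv 2 1 (by norm_num) (by norm_num), vf_one2]
  · rw [yv, if_neg h, map_sub, map_mul, map_mul,
      aeval_xv 2 0 (by norm_num) (by norm_num), aeval_xv 2 1 (by norm_num) (by norm_num),
      aeval_xv n 0 hn (by omega), aeval_xv n 1 hn (by omega), vf_zero, vf_zero, vf_one2,
      vf_one n h]
    have h20 : Xk 2 0 ≠ 0 := Xk_ne 2 0 (by norm_num) (by norm_num)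
    field_simp
    ring

lemma D_xv (n k : ℕ) (hn : 2 ≤ n) (hk : k ≤ n) :
    Dinf (xv n k) = if k = 0 then 0 else xv n (k - 1) := by
  rw [xv, dif_pos ⟨hn, hk⟩, Dinf, MvPolynomial.mkDerivation_X]

lemma Dy (n : ℕ) (hn : 2 ≤ n) : Dinf (yv (n + 1)) = 0 := by
  rw [yv, if_neg (by omega), map_sub, Derivation.leibniz, Derivation.leibniz,
    D_xv 2 0 (by norm_num) (by norm_num), D_xv 2 1 (by norm_num) (by norm_num),
    D_xv (n+1) 0 (by omega) (by omega), D_xv (n+1) 1 (by omega) (by omega)]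
  simp [smul_eq_mul, mul_comm]

def gi : ({n : ℕ // 2 ≤ n} ⊕ {n : ℕ // 2 ≤ n} ⊕ {p : ℕ × ℕ // 2 ≤ p.1 ∧ 2 ≤ p.2 ∧ p.2 ≤ p.1}) → Idx :=
  Sum.elim (fun n => ⟨(n.1, 0), ⟨n.2, Nat.zero_le _⟩⟩)
    (Sum.elim (fun n => ⟨(n.1, 1), ⟨n.2, le_trans (by norm_num) n.2⟩⟩)
      (fun p => ⟨p.1, ⟨p.2.1, p.2.2.2⟩⟩))

lemma gi_inj : Function.Injective gi := by
  rintro (a|a|a) (b|b|b) h <;>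
  · have h1 := congrArg (fun s : Idx => s.1.1) h
    have h2 := congrArg (fun s : Idx => s.1.2) h
    simp only [gi, Sum.elim_inl, Sum.elim_inr] at h1 h2
    first
    | exact congrArg Sum.inl (Subtype.ext h1)
    | exact congrArg (fun x => Sum.inr (Sum.inl x)) (Subtype.ext h1)
    | exact congrArg (fun x => Sum.inr (Sum.inr x)) (Subtype.ext (Prod.ext h1 h2))
    | (exfalso
       first
       | (have ha := a.2.2.1; omega)
       | (have hb := b.2.2.1; omega)
       | omega)

lemma indep : AlgebraicIndependent ℚ fam := by
  apply AlgebraicIndependent.of_comp (aeval vfI)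
  have base : AlgebraicIndependent ℚ (⇑emb ∘ (X : Idx → Rinf)) :=
    (MvPolynomial.algebraicIndependent_X Idx ℚ).map' em_inj
  have comp := base.comp gi gi_inj
  have hfe : ⇑(aeval vfI) ∘ fam = (⇑emb ∘ (X : Idx → Rinf)) ∘ gi := by
    funext i
    rcases i with a | a | p
    · show aeval vfI (xv a.1 0) = emb (X _)
      rw [aeval_xv a.1 0 a.2 (Nat.zero_le _), vf_zero, Xk, xv, dif_pos ⟨a.2, Nat.zero_le _⟩]
      rfl
    · show aeval vfI (yv a.1) = emb (X _)
      rw [aeval_y a.1 a.2, Xk, xv, dif_pos ⟨a.2, le_trans (by norm_num) a.2⟩]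
      rfl
    · obtain ⟨⟨n, k⟩, hp⟩ := p
      have hn : 2 ≤ n := hp.1
      have hk2 : 2 ≤ k := hp.2.1
      have hkn : k ≤ n := hp.2.2
      show aeval vfI (xbar n k) = emb (X ⟨(n, k), ⟨hn, hkn⟩⟩)
      have hXk : Xk n k = emb (X ⟨(n, k), ⟨hn, hkn⟩⟩) := by
        rw [Xk, xv, dif_pos ⟨hn, hkn⟩]
      rcases Nat.even_or_odd k with ⟨m, hm⟩ | ⟨m, hm⟩
      · rw [xbar, if_pos (by omega), show k / 2 = m by omega,
          aeval_xbarE n m hn (by omega) (by omega), show 2 * m = k by omega, hXk]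
      · rw [xbar, if_neg (by omega), show k / 2 = m by omega,
          aeval_xbarO n m hn (by omega) (by omega), show 2 * m + 1 = k by omega, hXk]
  rw [hfe]
  exact comp

/-- `D_∞(y_{n+1}) = 0` for every `n ≥ 2`, and the family consisting of all `x_{n,0}`,
all `y_n` and all `x̄_{n,k}` is algebraically independent over `ℚ`. -/
theorem statement6 :
    (∀ n : ℕ, 2 ≤ n → Dinf (yv (n + 1)) = 0) ∧ AlgebraicIndependent ℚ fam :=
  ⟨Dy, indep⟩

end
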